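/- Let b ≥ 2, let x = Σ_{j≥1} x_j b^{−j} with digits x_j ∈ {0,...,b−1}, and let [x]_r = Σ_{j=1}^r x_j b^{−j} denote its truncation. Then for every n ∈ ℕ₀ and r ≥ 1: φ_b(n) ∈ [[x]_r, [x]_r + b^{−r}) if and only if n ≡ ẋ_r (mod b^r), where ẋ_r = Σ_{j=1}^r x_j b^{j−1}. -/

import Mathlib

open Finset

open scoped Classical

/-- The radical inverse function in base `b`: `φ_b(n) = Σ_j n_j b^{-j-1}`. -/
noncomputable def radInv (b n : ℕ) : ℝ :=
  ∑' j : ℕ, ((n / b ^ j % b : ℕ) : ℝ) / (b : ℝ) ^ (j + 1)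

/-- The axis-parallel box `[0, y) = ∏_i [0, y_i)`. -/
def box {s : ℕ} (y : Fin s → ℝ) : Set (Fin s → ℝ) :=
  Set.univ.pi fun i => Set.Ico 0 (y i)

/-- The discrepancy function `Δ(y, (x_n)_{n=a}^{a+N-1})`. -/
noncomputable def disc {s : ℕ} (x : ℕ → Fin s → ℝ) (a N : ℕ) (y : Fin s → ℝ) : ℝ :=
  ∑ n ∈ Finset.Ico a (a + N),
    ((box y).indicator (fun _ => (1 : ℝ)) (x n) - ∏ i, y i)

/-- The star discrepancy of `(x_n)_{n=a}^{a+N-1}`. -/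
noncomputable def Dstar {s : ℕ} (x : ℕ → Fin s → ℝ) (a N : ℕ) : ℝ :=
  sSup {v : ℝ | ∃ y : Fin s → ℝ, (∀ i, y i ∈ Set.Ico (0 : ℝ) 1) ∧
    v = |disc x a N y| / (N : ℝ)}

/-- `(x_n)_{0 ≤ n < b^m}` is a `(t,m,s)`-net in base `b`. -/
def IsNet {s : ℕ} (b t m : ℕ) (x : ℕ → Fin s → ℝ) : Prop :=
  (∀ n < b ^ m, ∀ i, x n i ∈ Set.Ico (0 : ℝ) 1) ∧
  ∀ d a : Fin s → ℕ, (∀ i, a i < b ^ d i) → (∑ i, d i) + t = m →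
    ((Finset.range (b ^ m)).filter
      (fun n => ∀ i, x n i ∈ Set.Ico ((a i : ℝ) / b ^ d i) ((a i + 1 : ℝ) / b ^ d i))).card
      = b ^ t

/-- The `j`-th `b`-adic digit (`j ≥ 1`) of a real number `x ∈ [0,1)`. -/
noncomputable def bdigit (b : ℕ) (x : ℝ) (j : ℕ) : ℕ := (⌊x * (b : ℝ) ^ j⌋ % (b : ℤ)).toNat % b

/-- The `b`-adic absolute valuation `‖x‖_b = b^{-(k+1)}` where the digits
`x_1, …, x_k` vanish and `x_{k+1} ≠ 0`; it is `0` when all digits vanish. -/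
noncomputable def bval (b : ℕ) (x : ℝ) : ℝ :=
  if h : ∃ j, 1 ≤ j ∧ bdigit b x j ≠ 0 then
    (1 : ℝ) / (b : ℝ) ^ sInf {j | 1 ≤ j ∧ bdigit b x j ≠ 0}
  else 0

/-- The `b`-adic absolute valuation of a vector, `‖x‖_b = ∏_j ‖x^{(j)}‖_b`. -/
noncomputable def bvalVec {s : ℕ} (b : ℕ) (x : Fin s → ℝ) : ℝ := ∏ i, bval b (x i)

/-- Digitwise subtraction modulo `b`: `x ⊖ σ`. -/
noncomputable def bsub (b : ℕ) (x σ : ℝ) : ℝ :=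
  ∑' j : ℕ, (((bdigit b x (j + 1) + b - bdigit b σ (j + 1)) % b : ℕ) : ℝ) / (b : ℝ) ^ (j + 1)

/-- Digitwise addition modulo `b`: `x ⊕ σ`. -/
noncomputable def badd (b : ℕ) (x σ : ℝ) : ℝ :=
  ∑' j : ℕ, (((bdigit b x (j + 1) + bdigit b σ (j + 1)) % b : ℕ) : ℝ) / (b : ℝ) ^ (j + 1)

/-- A `b^m`-point set in `[0,1)^s` is `d`-admissible in base `b`. -/
def IsAdmissible {s : ℕ} (b m : ℕ) (d : ℤ) (x : ℕ → Fin s → ℝ) : Prop :=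
  ∀ k n : ℕ, k < n → n < b ^ m →
    bvalVec b (fun i => bsub b (x n i) (x k i)) > (b : ℝ) ^ (-((m : ℤ) + d))

/-- The two-dimensional Halton sequence in bases `2` and `3`. -/
noncomputable def H23 : ℕ → Fin 2 → ℝ := fun n => ![radInv 2 n, radInv 3 n]

/-- `ytil` is the quantity `ỹ_m` for the Halton sequence in bases `2` and `3`
(so that `τ₁ = 2`, `τ₂ = 1`). -/
def IsYtilde (m ytil : ℕ) : Prop :=
  ytil < 2 ^ (2 * (m + 1)) * 3 ^ (m + 1) ∧
  ∃ M₁ M₂ : ℤ,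
    M₁ * 3 ^ (m + 1) ≡ 1 [ZMOD (2 : ℤ) ^ (2 * (m + 1))] ∧
    M₂ * 2 ^ (2 * (m + 1)) ≡ 1 [ZMOD (3 : ℤ) ^ (m + 1)] ∧
    (ytil : ℤ) ≡ M₁ * 3 ^ (m + 1) * (∑ j ∈ Finset.Icc 1 (m + 1), (2 : ℤ) ^ (2 * j - 1))
        + M₂ * 2 ^ (2 * (m + 1)) * (∑ j ∈ Finset.Icc 1 (m + 1), (3 : ℤ) ^ (j - 1))
      [ZMOD (2 : ℤ) ^ (2 * (m + 1)) * 3 ^ (m + 1)]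

private lemma nat_sum_digits_lt (b : ℕ) (hb : 2 ≤ b) (r : ℕ) (a : ℕ → ℕ)
    (ha : ∀ j < r, a j < b) : ∑ j ∈ Finset.range r, a j * b ^ j < b ^ r := by
  induction r with
  | zero => simp
  | succ r ih =>
    rw [Finset.sum_range_succ]
    have h1 := ih (fun j hj => ha j (by omega))
    have h2 : a r * b ^ r ≤ (b - 1) * b ^ r :=
      Nat.mul_le_mul_right _ (by have := ha r (by omega); omega)
    have h3 : b ^ r + (b - 1) * b ^ r = b ^ (r + 1) := by
      have e1 : b ^ r + (b - 1) * b ^ r = (1 + (b - 1)) * b ^ r := by ring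
      have e2 : 1 + (b - 1) = b := by omega
      rw [e1, e2, pow_succ, mul_comm]
    omega

private lemma nat_digits_inj (b : ℕ) (hb : 2 ≤ b) :
    ∀ r (a c : ℕ → ℕ), (∀ j < r, a j < b) → (∀ j < r, c j < b) →
    (∑ j ∈ Finset.range r, a j * b ^ j = ∑ j ∈ Finset.range r, c j * b ^ j) →
    ∀ j < r, a j = c j := by
  intro r
  induction r with
  | zero => intro a c _ _ _ j hj; omega
  | succ r ih =>
    intro a c ha hc hsum j hj
    have key : ∀ d : ℕ → ℕ, ∑ j ∈ Finset.range (r + 1), d j * b ^ j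
        = d 0 + b * ∑ j ∈ Finset.range r, d (j + 1) * b ^ j := by
      intro d
      rw [Finset.sum_range_succ' (fun j => d j * b ^ j) r, Finset.mul_sum]
      simp only [pow_zero, mul_one, pow_succ]
      rw [add_comm]
      congr 1
      refine Finset.sum_congr rfl fun k _ => by ring
    rw [key a, key c] at hsum
    have ha0 : a 0 = (a 0 + b * ∑ j ∈ Finset.range r, a (j + 1) * b ^ j) % b := by
      rw [Nat.add_mul_mod_self_left, Nat.mod_eq_of_lt (ha 0 (by omega))]
    have hc0 : c 0 = (c 0 + b * ∑ j ∈ Finset.range r, c (j + 1) * b ^ j) % b := by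
      rw [Nat.add_mul_mod_self_left, Nat.mod_eq_of_lt (hc 0 (by omega))]
    have h0 : a 0 = c 0 := by rw [ha0, hc0, hsum]
    have hrest : ∑ j ∈ Finset.range r, a (j + 1) * b ^ j
        = ∑ j ∈ Finset.range r, c (j + 1) * b ^ j := by
      have h := hsum
      rw [h0] at h
      exact Nat.eq_of_mul_eq_mul_left (by omega : 0 < b) (by omega)
    rcases Nat.eq_zero_or_pos j with hj0 | hj0
    · rw [hj0]; exact h0
    · obtain ⟨k, rfl⟩ : ∃ k, j = k + 1 := ⟨j - 1, by omega⟩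
      exact ih (fun i => a (i + 1)) (fun i => c (i + 1))
        (fun i hi => ha (i + 1) (by omega)) (fun i hi => hc (i + 1) (by omega))
        hrest k (by omega)

private lemma nat_mod_pow_eq_sum (b r n : ℕ) :
    n % b ^ r = ∑ j ∈ Finset.range r, (n / b ^ j % b) * b ^ j := by
  induction r with
  | zero => simp [Nat.mod_one]
  | succ r ih => rw [Nat.mod_pow_succ, Finset.sum_range_succ, ← ih, mul_comm]

private lemma sum_digit_div_lt_one (b : ℕ) (hb : 2 ≤ b) :
    ∀ (N : ℕ) (e : ℕ → ℕ), (∀ k, e k < b) →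
    ∑ k ∈ Finset.range N, (e k : ℝ) / (b : ℝ) ^ (k + 1) < 1 := by
  intro N
  induction N with
  | zero => intro e _; simp
  | succ N ih =>
    intro e he
    have hb0 : (0 : ℝ) < (b : ℝ) := by positivity
    rw [Finset.sum_range_succ' (fun k => (e k : ℝ) / (b : ℝ) ^ (k + 1)) N]
    have h1 : ∑ k ∈ Finset.range N, (e (k + 1) : ℝ) / (b : ℝ) ^ (k + 1 + 1)
        = (∑ k ∈ Finset.range N, (e (k + 1) : ℝ) / (b : ℝ) ^ (k + 1)) / b := by
      rw [Finset.sum_div]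
      refine Finset.sum_congr rfl fun k _ => ?_
      rw [pow_succ]; ring
    rw [h1]
    have h2 := ih (fun k => e (k + 1)) (fun k => he (k + 1))
    have h3 : (e 0 : ℝ) ≤ (b : ℝ) - 1 := by
      have h := he 0
      have hh : (e 0 : ℝ) + 1 ≤ (b : ℝ) := by exact_mod_cast h
      linarith
    have h4 : (∑ k ∈ Finset.range N, (e (k + 1) : ℝ) / (b : ℝ) ^ (k + 1)) / b
        < 1 / b := by gcongr
    have h5 : (e 0 : ℝ) / (b : ℝ) ^ (0 + 1) ≤ ((b : ℝ) - 1) / b := by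
      simp only [zero_add, pow_one]; gcongr
    have h6 : 1 / (b : ℝ) + ((b : ℝ) - 1) / b = 1 := by field_simp; ring
    linarith

private lemma radInv_eq_sum (b n N : ℕ) (hb : 2 ≤ b) (hN : n < N) :
    radInv b n = ∑ j ∈ Finset.range N, ((n / b ^ j % b : ℕ) : ℝ) / (b : ℝ) ^ (j + 1) := by
  refine tsum_eq_sum fun j hj => ?_
  have hjN : N ≤ j := by simpa using hj
  have : n < b ^ j := by
    calc n < N := hN
      _ ≤ j := hjN
      _ ≤ b ^ j := Nat.le_of_lt (Nat.lt_pow_self (by omega : 1 < b))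
  simp [Nat.div_eq_of_lt this]


/-- Lemma 4.1: the radical inverse `φ_b(n)` lies in the elementary interval
determined by the first `r` digits of `x` iff `n ≡ ẋ_r (mod b^r)`. -/
theorem radInv_mem_iff_mod (b : ℕ) (hb : 2 ≤ b) (x : ℕ → ℕ) (hx : ∀ j, x j < b)
    (n r : ℕ) (hr : 1 ≤ r) :
    radInv b n ∈ Set.Ico (∑ j ∈ Finset.Icc 1 r, (x j : ℝ) / (b : ℝ) ^ j)
        ((∑ j ∈ Finset.Icc 1 r, (x j : ℝ) / (b : ℝ) ^ j) + ((b : ℝ) ^ r)⁻¹) ↔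
      n ≡ (∑ j ∈ Finset.Icc 1 r, x j * b ^ (j - 1)) [MOD b ^ r] := by
  have hb0 : (0 : ℝ) < (b : ℝ) := by positivity
  set d : ℕ → ℕ := fun j => n / b ^ j % b with hd
  have hdlt : ∀ j, d j < b := fun j => Nat.mod_lt _ (by omega)
  set B : ℝ := (b : ℝ) ^ r with hBdef
  have hB : (0 : ℝ) < B := by positivity
  -- split radInv into head and tail
  set N : ℕ := r + (n + 1) with hN
  have hsplit : radInv b n
      = (∑ j ∈ Finset.range r, (d j : ℝ) / (b : ℝ) ^ (j + 1))
        + ∑ k ∈ Finset.range (n + 1), (d (r + k) : ℝ) / (b : ℝ) ^ (r + k + 1) := by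
    rw [radInv_eq_sum b n N hb (by omega)]
    have hNsplit : N = r + (n + 1) := hN
    rw [hNsplit, Finset.sum_range_add]
  -- tail as t / B with 0 ≤ t < 1
  set t : ℝ := ∑ k ∈ Finset.range (n + 1), (d (r + k) : ℝ) / (b : ℝ) ^ (k + 1) with ht
  have htail : ∑ k ∈ Finset.range (n + 1), (d (r + k) : ℝ) / (b : ℝ) ^ (r + k + 1) = t / B := by
    rw [ht, Finset.sum_div]
    refine Finset.sum_congr rfl fun k _ => ?_
    rw [div_div, hBdef, ← pow_add]
    congr 2
    omega
  have ht0 : 0 ≤ t := Finset.sum_nonneg fun k _ => by positivity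
  have ht1 : t < 1 := sum_digit_div_lt_one b hb (n + 1) (fun k => d (r + k)) (fun k => hdlt _)
  -- head as R / B
  set R : ℕ := ∑ j ∈ Finset.range r, d j * b ^ (r - 1 - j) with hR
  have hhead : ∑ j ∈ Finset.range r, (d j : ℝ) / (b : ℝ) ^ (j + 1) = (R : ℝ) / B := by
    rw [hR, Nat.cast_sum, Finset.sum_div]
    refine Finset.sum_congr rfl fun j hj => ?_
    have hjr : j < r := Finset.mem_range.mp hj
    have hexp : (b : ℝ) ^ r = (b : ℝ) ^ (r - 1 - j) * (b : ℝ) ^ (j + 1) := by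
      rw [← pow_add]
      congr 1
      omega
    push_cast
    rw [hBdef, hexp]
    have hbj : ((b : ℝ) ^ (j + 1)) ≠ 0 := by positivity
    have hbr : ((b : ℝ) ^ (r - 1 - j)) ≠ 0 := by positivity
    field_simp
  -- the target interval endpoints as X / B
  set X : ℕ := ∑ j ∈ Finset.Icc 1 r, x j * b ^ (r - j) with hX
  have hSX : ∑ j ∈ Finset.Icc 1 r, (x j : ℝ) / (b : ℝ) ^ j = (X : ℝ) / B := by
    rw [hX, Nat.cast_sum, Finset.sum_div]
    refine Finset.sum_congr rfl fun j hj => ?_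
    obtain ⟨hj1, hjr⟩ := Finset.mem_Icc.mp hj
    have hexp : (b : ℝ) ^ r = (b : ℝ) ^ (r - j) * (b : ℝ) ^ j := by
      rw [← pow_add]
      congr 1
      omega
    push_cast
    rw [hBdef, hexp]
    have hbj : ((b : ℝ) ^ j) ≠ 0 := by positivity
    have hbr : ((b : ℝ) ^ (r - j)) ≠ 0 := by positivity
    field_simp
  -- membership iff R = X
  have hmem : radInv b n ∈ Set.Ico (∑ j ∈ Finset.Icc 1 r, (x j : ℝ) / (b : ℝ) ^ j)
      ((∑ j ∈ Finset.Icc 1 r, (x j : ℝ) / (b : ℝ) ^ j) + ((b : ℝ) ^ r)⁻¹) ↔ R = X := by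
    rw [Set.mem_Ico, hsplit, htail, hhead, hSX, ← add_div, ← hBdef, inv_eq_one_div,
      ← add_div]
    rw [div_le_div_iff_of_pos_right hB, div_lt_div_iff_of_pos_right hB]
    constructor
    · rintro ⟨h1, h2⟩
      have hXR : (X : ℝ) < (R : ℝ) + 1 := by linarith
      have hRX : (R : ℝ) < (X : ℝ) + 1 := by linarith
      have hXR' : X < R + 1 := by exact_mod_cast hXR
      have hRX' : R < X + 1 := by exact_mod_cast hRX
      omega
    · intro hRXeq
      rw [hRXeq]
      exact ⟨by linarith, by linarith⟩
  rw [hmem]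
  -- now the arithmetic equivalence
  set Y : ℕ := ∑ j ∈ Finset.Icc 1 r, x j * b ^ (j - 1) with hY
  have hIcc : ∀ (f : ℕ → ℕ), ∑ j ∈ Finset.Icc 1 r, f j = ∑ i ∈ Finset.range r, f (1 + i) := by
    intro f
    rw [← Finset.Ico_add_one_right_eq_Icc, Finset.sum_Ico_eq_sum_range]
    simp
  have hYr : Y = ∑ i ∈ Finset.range r, x (i + 1) * b ^ i := by
    rw [hY, hIcc]
    refine Finset.sum_congr rfl fun i hi => ?_
    have e2 : 1 + i - 1 = i := by omega
    have e1 : 1 + i = i + 1 := by omega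
    rw [e2, e1]
  have hYlt : Y < b ^ r := by
    rw [hYr]
    exact nat_sum_digits_lt b hb r _ (fun i _ => hx (i + 1))
  have hmod : n % b ^ r = ∑ i ∈ Finset.range r, d i * b ^ i := nat_mod_pow_eq_sum b r n
  -- pivot: digits agree
  have hRX_iff : R = X ↔ ∀ i < r, d i = x (i + 1) := by
    have hRrefl : R = ∑ j ∈ Finset.range r, d (r - 1 - j) * b ^ j := by
      rw [hR, ← Finset.sum_range_reflect (fun j => d (r - 1 - j) * b ^ j) r]
      refine Finset.sum_congr rfl fun j hj => ?_
      have hjr : j < r := Finset.mem_range.mp hj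
      have : r - 1 - (r - 1 - j) = j := by omega
      rw [this]
    have hXrefl : X = ∑ j ∈ Finset.range r, x (r - j) * b ^ j := by
      rw [hX, hIcc, ← Finset.sum_range_reflect (fun j => x (r - j) * b ^ j) r]
      refine Finset.sum_congr rfl fun j hj => ?_
      have hjr : j < r := Finset.mem_range.mp hj
      have h1 : r - (r - 1 - j) = 1 + j := by omega
      have h2 : r - (1 + j) = r - 1 - j := by omega
      rw [h1, h2]
    constructor
    · intro hRXeq i hi
      have := nat_digits_inj b hb r (fun j => d (r - 1 - j)) (fun j => x (r - j))
        (fun j _ => hdlt _) (fun j _ => hx _)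
        (by rw [← hRrefl, ← hXrefl, hRXeq]) (r - 1 - i) (by omega)
      have e1 : r - 1 - (r - 1 - i) = i := by omega
      have e2 : r - (r - 1 - i) = i + 1 := by omega
      rwa [e1, e2] at this
    · intro hdig
      rw [hRrefl, hXrefl]
      refine Finset.sum_congr rfl fun j hj => ?_
      have hjr : j < r := Finset.mem_range.mp hj
      have e1 : r - j = (r - 1 - j) + 1 := by omega
      rw [e1, hdig (r - 1 - j) (by omega)]
  have hmod_iff : n % b ^ r = Y ↔ ∀ i < r, d i = x (i + 1) := by
    rw [hmod, hYr]
    constructor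
    · intro h i hi
      exact nat_digits_inj b hb r d (fun i => x (i + 1))
        (fun j _ => hdlt _) (fun j _ => hx _) h i hi
    · intro hdig
      exact Finset.sum_congr rfl fun i hi => by
        rw [hdig i (Finset.mem_range.mp hi)]
  have : n ≡ Y [MOD b ^ r] ↔ n % b ^ r = Y := by
    unfold Nat.ModEq
    rw [Nat.mod_eq_of_lt hYlt]
  rw [this, hRX_iff, hmod_iff]
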